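/- Let L_G be the normalized Laplacian of a d-regular graph G that admits a (k,φ,ε)-clustering C₁,...,C_k with ε ≤ φ²/100. Let u be a unit-norm eigenvector of L_G with eigenvalue at most 2ε. Then ‖u‖_∞ ≤ n^{20ε/φ²}·√(160/minᵢ∈[k]|Cᵢ|). -/

import Mathlib

open Matrix

/-- Number of (ordered) edges of `G` running between `A` and `B`; for disjoint
`A`, `B` this is `|E(A,B)|`. -/
def eCount {n : ℕ} (G : SimpleGraph (Fin n)) [DecidableRel G.Adj]
    (A B : Finset (Fin n)) : ℕ :=
  ∑ x ∈ A, ∑ y ∈ B, if G.Adj x y then 1 else 0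

namespace Stmt17Aux

/-- The superlevel set `{y : θ ≤ u y}`. -/
noncomputable def lvl {n : ℕ} (u : Fin n → ℝ) (θ : ℝ) : Finset (Fin n) :=
  Finset.univ.filter (fun y => θ ≤ u y)

lemma mem_lvl {n : ℕ} {u : Fin n → ℝ} {θ : ℝ} {y : Fin n} : y ∈ lvl u θ ↔ θ ≤ u y := by
  simp [lvl]

variable {n : ℕ} (G : SimpleGraph (Fin n)) [DecidableRel G.Adj]

lemma eCount_union (A : Finset (Fin n)) {B₁ B₂ : Finset (Fin n)} (h : Disjoint B₁ B₂) :
    eCount G A (B₁ ∪ B₂) = eCount G A B₁ + eCount G A B₂ := by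
  unfold eCount
  rw [← Finset.sum_add_distrib]
  exact Finset.sum_congr rfl fun x _ => Finset.sum_union h

lemma eCount_le {d : ℕ} (hreg : G.IsRegularOfDegree d) (A B : Finset (Fin n)) :
    eCount G A B ≤ d * B.card := by
  unfold eCount
  rw [Finset.sum_comm]
  have h1 : ∀ y : Fin n, ∑ x ∈ A, (if G.Adj x y then 1 else 0) ≤ d := by
    intro y
    calc ∑ x ∈ A, (if G.Adj x y then 1 else 0)
        ≤ ∑ x : Fin n, (if G.Adj x y then 1 else 0) :=
          Finset.sum_le_sum_of_subset (Finset.subset_univ A)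
      _ = (Finset.univ.filter (fun x => G.Adj x y)).card := by
          rw [Finset.card_filter]
      _ = (G.neighborFinset y).card := by
          congr 1
          rw [SimpleGraph.neighborFinset_eq_filter]
          apply Finset.filter_congr
          intro x _
          simp [G.adj_comm]
      _ = d := hreg y
  calc ∑ y ∈ B, ∑ x ∈ A, (if G.Adj x y then 1 else 0) ≤ ∑ _y ∈ B, d :=
        Finset.sum_le_sum fun y _ => h1 y
    _ = d * B.card := by rw [Finset.sum_const, smul_eq_mul, mul_comm]

lemma cross_identity {d : ℕ} (hd : 0 < d) (hreg : G.IsRegularOfDegree d)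
    {u : Fin n → ℝ} {lam : ℝ}
    (heig : ((1 : Matrix (Fin n) (Fin n) ℝ) - (d : ℝ)⁻¹ • G.adjMatrix ℝ).mulVec u = lam • u)
    (S : Finset (Fin n)) :
    ∑ y ∈ S, ∑ z ∈ Sᶜ, (if G.Adj y z then u y - u z else 0)
      = lam * ((d:ℝ) * ∑ y ∈ S, u y) := by
  have hdne : (d:ℝ) ≠ 0 := Nat.cast_ne_zero.mpr hd.ne'
  have hpt : ∀ y, ∑ z ∈ G.neighborFinset y, (u y - u z) = lam * ((d:ℝ) * u y) := by
    intro y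
    have h1 := congrFun heig y
    simp only [Matrix.sub_mulVec, Matrix.smul_mulVec, Matrix.one_mulVec,
      Pi.sub_apply, Pi.smul_apply, SimpleGraph.adjMatrix_mulVec_apply, smul_eq_mul] at h1
    have h2 : ∑ z ∈ G.neighborFinset y, u z = (d:ℝ) * (u y - lam * u y) := by
      field_simp at h1
      linarith
    have hc : (G.neighborFinset y).card = d := hreg y
    rw [Finset.sum_sub_distrib, Finset.sum_const, hc, h2]
    ring
  have huniv : ∀ y, ∑ z : Fin n, (if G.Adj y z then u y - u z else 0)
      = lam * ((d:ℝ) * u y) := by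
    intro y
    rw [← hpt y, SimpleGraph.neighborFinset_eq_filter, Finset.sum_filter]
  have hanti : ∑ y ∈ S, ∑ z ∈ S, (if G.Adj y z then u y - u z else 0) = 0 := by
    have hsw : ∑ y ∈ S, ∑ z ∈ S, (if G.Adj y z then u y - u z else 0)
        = ∑ y ∈ S, ∑ z ∈ S, (if G.Adj y z then u z - u y else 0) := by
      rw [Finset.sum_comm]
      refine Finset.sum_congr rfl fun y _ => Finset.sum_congr rfl fun z _ => ?_
      exact if_congr (G.adj_comm z y) rfl rfl
    have : (2:ℝ) * ∑ y ∈ S, ∑ z ∈ S, (if G.Adj y z then u y - u z else 0) = 0 := by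
      rw [two_mul]
      nth_rewrite 2 [hsw]
      rw [← Finset.sum_add_distrib]
      refine Finset.sum_eq_zero fun y _ => ?_
      rw [← Finset.sum_add_distrib]
      refine Finset.sum_eq_zero fun z _ => ?_
      by_cases h : G.Adj y z <;> simp [h]
    linarith
  have hsplit : ∀ y ∈ S, ∑ z : Fin n, (if G.Adj y z then u y - u z else 0)
      = ∑ z ∈ S, (if G.Adj y z then u y - u z else 0)
        + ∑ z ∈ Sᶜ, (if G.Adj y z then u y - u z else 0) := by
    intro y _
    rw [Finset.sum_add_sum_compl]
  calc ∑ y ∈ S, ∑ z ∈ Sᶜ, (if G.Adj y z then u y - u z else 0)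
      = ∑ y ∈ S, (∑ z ∈ S, (if G.Adj y z then u y - u z else 0)
          + ∑ z ∈ Sᶜ, (if G.Adj y z then u y - u z else 0))
        - ∑ y ∈ S, ∑ z ∈ S, (if G.Adj y z then u y - u z else 0) := by
        rw [Finset.sum_add_distrib]; ring
    _ = ∑ y ∈ S, ∑ z : Fin n, (if G.Adj y z then u y - u z else 0) := by
        rw [hanti, sub_zero]
        exact (Finset.sum_congr rfl hsplit).symm
    _ = ∑ y ∈ S, lam * ((d:ℝ) * u y) := Finset.sum_congr rfl fun y _ => huniv y
    _ = lam * ((d:ℝ) * ∑ y ∈ S, u y) := by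
        rw [Finset.mul_sum, Finset.mul_sum]

lemma expansion {k d : ℕ} {φ : ℝ}
    (C : Fin k → Finset (Fin n))
    (hpart : ∀ v : Fin n, ∃! i, v ∈ C i)
    (hinner : ∀ i, ∀ S ⊆ C i, S.Nonempty → 2 * S.card ≤ (C i).card →
      φ * ((d : ℝ) * S.card) ≤ (eCount G S (C i \ S) : ℝ))
    (S : Finset (Fin n))
    (hgood : ∀ i, 2 * (S ∩ C i).card ≤ (C i).card) :
    φ * ((d:ℝ) * S.card) ≤ (eCount G S Sᶜ : ℝ) := by
  have hsum_split : ∀ (f : Fin n → ℕ), ∑ i, ∑ y ∈ S ∩ C i, f y = ∑ y ∈ S, f y := by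
    intro f
    have h1 : ∀ i, ∑ y ∈ S ∩ C i, f y = ∑ y ∈ S, if y ∈ C i then f y else 0 := by
      intro i
      rw [← Finset.sum_filter, Finset.filter_mem_eq_inter]
    simp only [h1]
    rw [Finset.sum_comm]
    refine Finset.sum_congr rfl fun y _ => ?_
    obtain ⟨i₀, hi₀, huniq⟩ := hpart y
    rw [Finset.sum_eq_single i₀]
    · rw [if_pos hi₀]
    · intro i _ hne
      rw [if_neg (fun h => hne (huniq i h))]
    · intro h; exact absurd (Finset.mem_univ i₀) h
  have hcards : ∑ i, (S ∩ C i).card = S.card := by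
    simpa using hsum_split (fun _ => 1)
  have hstep : ∀ i, φ * ((d:ℝ) * ((S ∩ C i).card : ℝ)) ≤ (eCount G (S ∩ C i) (C i \ S) : ℝ) := by
    intro i
    rcases Finset.eq_empty_or_nonempty (S ∩ C i) with he | hne
    · rw [he]
      simp
    · have hsub : S ∩ C i ⊆ C i := Finset.inter_subset_right
      have := hinner i (S ∩ C i) hsub hne (hgood i)
      have hdiff : C i \ (S ∩ C i) = C i \ S := by
        ext z; simp only [Finset.mem_sdiff, Finset.mem_inter]; tauto
      rwa [hdiff] at this
  have hcount : ∑ i, eCount G (S ∩ C i) (C i \ S) ≤ eCount G S Sᶜ := by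
    have h2 : ∀ i, eCount G (S ∩ C i) (C i \ S)
        ≤ ∑ y ∈ S ∩ C i, ∑ z ∈ Sᶜ, (if G.Adj y z then 1 else 0) := by
      intro i
      refine Finset.sum_le_sum fun y _ => Finset.sum_le_sum_of_subset ?_
      intro z hz
      rw [Finset.mem_sdiff] at hz
      rw [Finset.mem_compl]
      exact hz.2
    calc ∑ i, eCount G (S ∩ C i) (C i \ S)
        ≤ ∑ i, ∑ y ∈ S ∩ C i, ∑ z ∈ Sᶜ, (if G.Adj y z then 1 else 0) :=
          Finset.sum_le_sum fun i _ => h2 i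
      _ = eCount G S Sᶜ := hsum_split _
  calc φ * ((d:ℝ) * (S.card : ℝ)) = ∑ i, φ * ((d:ℝ) * ((S ∩ C i).card : ℝ)) := by
        rw [← Finset.mul_sum, ← Finset.mul_sum, ← Nat.cast_sum, hcards]
    _ ≤ ∑ i, (eCount G (S ∩ C i) (C i \ S) : ℝ) := Finset.sum_le_sum fun i _ => hstep i
    _ = ((∑ i, eCount G (S ∩ C i) (C i \ S) : ℕ) : ℝ) := by push_cast; ring
    _ ≤ (eCount G S Sᶜ : ℝ) := Nat.cast_le.mpr hcount

lemma cross_lower {θ θ' : ℝ} (hθ' : θ' ≤ θ) {u : Fin n → ℝ}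
    {S S' : Finset (Fin n)} (hSS : S ⊆ S')
    (hS : ∀ y ∈ S, θ ≤ u y) (hSc : ∀ z, z ∉ S → u z < θ) (hS'c : ∀ z, z ∉ S' → u z < θ') :
    (θ - θ') * (eCount G S S'ᶜ : ℝ)
      ≤ ∑ y ∈ S, ∑ z ∈ Sᶜ, (if G.Adj y z then u y - u z else 0) := by
  have hcompl : (S'ᶜ : Finset (Fin n)) ⊆ Sᶜ := Finset.compl_subset_compl.mpr hSS
  have step1 : ∑ y ∈ S, ∑ z ∈ S'ᶜ, (if G.Adj y z then u y - u z else 0)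
      ≤ ∑ y ∈ S, ∑ z ∈ Sᶜ, (if G.Adj y z then u y - u z else 0) := by
    refine Finset.sum_le_sum fun y hy => ?_
    refine Finset.sum_le_sum_of_subset_of_nonneg hcompl fun z hz _ => ?_
    rw [Finset.mem_compl] at hz
    have := hSc z hz
    have := hS y hy
    split <;> [linarith; rfl]
  have step2 : (θ - θ') * (eCount G S S'ᶜ : ℝ)
      ≤ ∑ y ∈ S, ∑ z ∈ S'ᶜ, (if G.Adj y z then u y - u z else 0) := by
    unfold eCount
    push_cast
    rw [Finset.mul_sum]
    refine Finset.sum_le_sum fun y hy => ?_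
    rw [Finset.mul_sum]
    refine Finset.sum_le_sum fun z hz => ?_
    rw [Finset.mem_compl] at hz
    have h1 := hS y hy
    have h2 := hS'c z hz
    split
    · linarith
    · simp
  linarith

lemma rpow_aux {a φ p : ℝ} (ha0 : 0 < a) (ha : a ≤ 1/25) (hφ0 : 0 < φ) (hφ1 : φ ≤ 1)
    (hp : 5*a/φ ≤ p) : (1-a)⁻¹ ≤ (1 + 2*φ/5) ^ p := by
  have h1a : 0 < 1 - a := by linarith
  have hb0 : 0 < 1 + 2*φ/5 := by linarith
  have hp0 : 0 ≤ p := le_trans (by positivity) hp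
  rw [Real.rpow_def_of_pos hb0]
  rw [show (1-a)⁻¹ = Real.exp (Real.log (1-a)⁻¹) from (Real.exp_log (by positivity)).symm]
  apply Real.exp_le_exp.mpr
  have hlog1 : Real.log (1-a)⁻¹ ≤ a/(1-a) := by
    have h := Real.log_le_sub_one_of_pos (show (0:ℝ) < (1-a)⁻¹ by positivity)
    have heq : (1-a)⁻¹ - 1 = a/(1-a) := by field_simp; ring
    linarith
  have hlog2 : (2*φ/5)/(1 + 2*φ/5) ≤ Real.log (1 + 2*φ/5) := by
    have h := Real.log_le_sub_one_of_pos (show (0:ℝ) < (1 + 2*φ/5)⁻¹ by positivity)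
    rw [Real.log_inv] at h
    have heq : (1 + 2*φ/5)⁻¹ - 1 = -((2*φ/5)/(1+2*φ/5)) := by field_simp; ring
    linarith
  have hmid : a/(1-a) ≤ p * ((2*φ/5)/(1 + 2*φ/5)) := by
    have h1 : a/(1-a) ≤ (25/24)*a := by
      rw [div_le_iff₀ h1a]; nlinarith
    have h2 : 2*a/(1 + 2*φ/5) ≤ p * ((2*φ/5)/(1 + 2*φ/5)) := by
      have h3 : 2*a ≤ p * (2*φ/5) := by
        have h4 : 5*a/φ * (2*φ/5) = 2*a := by field_simp
        nlinarith [mul_le_mul_of_nonneg_right hp (show (0:ℝ) ≤ 2*φ/5 by positivity)]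
      rw [div_le_iff₀ hb0]
      calc 2*a ≤ p*(2*φ/5) := h3
        _ = p * ((2*φ/5)/(1+2*φ/5)) * (1+2*φ/5) := by field_simp
    have h5 : (25/24)*a ≤ 2*a/(1+2*φ/5) := by
      rw [le_div_iff₀ hb0]; nlinarith
    linarith
  calc Real.log (1-a)⁻¹ ≤ a/(1-a) := hlog1
    _ ≤ p * ((2*φ/5)/(1 + 2*φ/5)) := hmid
    _ ≤ p * Real.log (1 + 2*φ/5) := mul_le_mul_of_nonneg_left hlog2 hp0
    _ = Real.log (1 + 2*φ/5) * p := mul_comm _ _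

lemma geom_aux {r : ℝ} (hr0 : 0 ≤ r) (hr1 : r < 1) (j : ℕ) :
    ∑ l ∈ Finset.range j, r^(j-l) ≤ r/(1-r) := by
  have h1 : ∑ l ∈ Finset.range j, r^(j-l) = ∑ l ∈ Finset.range j, r^(l+1) := by
    rw [← Finset.sum_range_reflect]
    refine Finset.sum_congr rfl fun l hl => ?_
    rw [Finset.mem_range] at hl
    congr 1
    omega
  have h2 : ∑ l ∈ Finset.range j, r^(l+1) = r * ∑ l ∈ Finset.range j, r^l := by
    rw [Finset.mul_sum]
    exact Finset.sum_congr rfl fun l _ => by ring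
  have h3 : (∑ l ∈ Finset.range j, r^l) * (1-r) = 1 - r^j := by
    linear_combination (-1 : ℝ) * geom_sum_mul r j
  have h4 : ∑ l ∈ Finset.range j, r^l ≤ 1/(1-r) := by
    rw [le_div_iff₀ (by linarith)]
    nlinarith [pow_nonneg hr0 j]
  rw [h1, h2, div_eq_mul_one_div]
  exact mul_le_mul_of_nonneg_left h4 hr0

lemma abstract_layer {a φ : ℝ} (ha0 : 0 < a) (haφ : a ≤ φ/25) (hφ0 : 0 < φ) (hφ1 : φ ≤ 1)
    (e : ℕ → ℝ) (hepos : ∀ l, 0 < e l) (j : ℕ)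
    (hestep : ∀ l, l < j → ((1-a)*(1+2*φ/5)) * e l ≤ e (l+1)) :
    ∑ l ∈ Finset.range j, a * e l ≤ (5/43) * e j := by
  have ha1 : a ≤ 1/25 := by linarith
  have h1a : (0:ℝ) < 1 - a := by linarith
  set Q : ℝ := (1-a)*(1+2*φ/5) with hQdef
  have hQ0 : 0 < Q := by rw [hQdef]; nlinarith
  have hQ1 : 1 + 43*φ/125 ≤ Q := by
    rw [hQdef]
    nlinarith [mul_le_mul_of_nonneg_right haφ (le_of_lt hφ0), sq_nonneg φ]
  have hQgt : 1 < Q := by nlinarith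
  set r : ℝ := Q⁻¹ with hrdef
  have hr0 : 0 < r := inv_pos.mpr hQ0
  have hr1 : r < 1 := by
    rw [hrdef]
    rw [inv_lt_one_iff₀]
    right; exact hQgt
  have hrQ : r * Q = 1 := inv_mul_cancel₀ (ne_of_gt hQ0)
  have hgeo : ∀ l, l ≤ j → e l ≤ e j * r^(j-l) := by
    have H : ∀ i, ∀ l, l + i ≤ j → e l * Q^i ≤ e (l+i) := by
      intro i
      induction i with
      | zero => intro l _; simp
      | succ i ihh =>
        intro l hl
        have h1 := ihh l (by omega)
        have h2 := hestep (l+i) (by omega)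
        calc e l * Q^(i+1) = (e l * Q^i) * Q := by ring
          _ ≤ e (l+i) * Q := mul_le_mul_of_nonneg_right h1 hQ0.le
          _ = Q * e (l+i) := mul_comm _ _
          _ ≤ e (l+i+1) := h2
    intro l hl
    have h1 := H (j-l) l (by omega)
    rw [show l + (j-l) = j by omega] at h1
    have hrpow : r^(j-l) * Q^(j-l) = 1 := by
      rw [← mul_pow, hrQ, one_pow]
    calc e l = e l * (Q^(j-l) * r^(j-l)) := by
          rw [mul_comm (Q^(j-l)) (r^(j-l)), hrpow, mul_one]
      _ = (e l * Q^(j-l)) * r^(j-l) := by ring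
      _ ≤ e j * r^(j-l) := mul_le_mul_of_nonneg_right h1 (pow_nonneg hr0.le _)
  have h1 : ∑ l ∈ Finset.range j, e l ≤ e j * (r/(1-r)) := by
    calc ∑ l ∈ Finset.range j, e l ≤ ∑ l ∈ Finset.range j, e j * r^(j-l) :=
          Finset.sum_le_sum fun l hl => hgeo l (le_of_lt (Finset.mem_range.mp hl))
      _ = e j * ∑ l ∈ Finset.range j, r^(j-l) := by rw [Finset.mul_sum]
      _ ≤ e j * (r/(1-r)) := mul_le_mul_of_nonneg_left (geom_aux hr0.le hr1 j) (hepos j).le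
  have h2 : a * (r/(1-r)) ≤ 5/43 := by
    have h3 : a ≤ (5/43) * (Q - 1) := by
      nlinarith
    have h4 : 0 < 1 - r := by linarith
    rw [mul_div_assoc', div_le_iff₀ h4]
    nlinarith [mul_le_mul_of_nonneg_right h3 hr0.le]
  calc ∑ l ∈ Finset.range j, a * e l = a * ∑ l ∈ Finset.range j, e l := by
        rw [Finset.mul_sum]
    _ ≤ a * (e j * (r/(1-r))) := mul_le_mul_of_nonneg_left h1 ha0.le
    _ = (a * (r/(1-r))) * e j := by ring
    _ ≤ (5/43) * e j := mul_le_mul_of_nonneg_right h2 (hepos j).le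

end Stmt17Aux

set_option maxHeartbeats 1000000 in
lemma key {n k d : ℕ} (hk : 0 < k) (hd : 0 < d)
    {φ ε : ℝ} (hφ : 0 < φ) (hφ1 : φ < 1) (hε : 0 ≤ ε) (hεφ : ε ≤ φ ^ 2 / 100)
    (G : SimpleGraph (Fin n)) [DecidableRel G.Adj] (hreg : G.IsRegularOfDegree d)
    (C : Fin k → Finset (Fin n))
    (hpart : ∀ v : Fin n, ∃! i, v ∈ C i)
    (hCne : ∀ i, (C i).Nonempty)
    (hinner : ∀ i, ∀ S ⊆ C i, S.Nonempty → 2 * S.card ≤ (C i).card →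
      φ * ((d : ℝ) * S.card) ≤ (eCount G S (C i \ S) : ℝ))
    (u : Fin n → ℝ) (hu : ∑ x, u x ^ 2 = 1)
    (lam : ℝ) (hlam : lam ≤ 2 * ε)
    (heig : ((1 : Matrix (Fin n) (Fin n) ℝ) - (d : ℝ)⁻¹ • G.adjMatrix ℝ).mulVec u = lam • u) :
    ∀ x, u x ≤ (n : ℝ) ^ (20 * ε / φ ^ 2) *
      Real.sqrt (160 /
        (Finset.univ.inf' (Finset.univ_nonempty_iff.mpr ⟨⟨0, hk⟩⟩)
          fun i : Fin k => ((C i).card : ℝ))) := by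
  classical
  intro x
  have hn0 : 0 < n := (hCne ⟨0, hk⟩).choose.pos
  set m : ℝ := Finset.univ.inf' (Finset.univ_nonempty_iff.mpr ⟨⟨0, hk⟩⟩)
      (fun i : Fin k => ((C i).card : ℝ)) with hmdef
  have hm1 : (1:ℝ) ≤ m := by
    apply Finset.le_inf'
    intro i _
    exact_mod_cast (hCne i).card_pos
  have hm0 : (0:ℝ) < m := lt_of_lt_of_le one_pos hm1
  have hmle : ∀ i, m ≤ ((C i).card : ℝ) := fun i => Finset.inf'_le _ (Finset.mem_univ i)
  set p : ℝ := 20 * ε / φ ^ 2 with hpdef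
  have hp0 : 0 ≤ p := by positivity
  have hn1 : (1:ℝ) ≤ (n:ℝ) := by exact_mod_cast hn0
  have hnp1 : (1:ℝ) ≤ (n:ℝ) ^ p := by
    rw [show (1:ℝ) = (n:ℝ) ^ (0:ℝ) from (Real.rpow_zero _).symm]
    exact Real.rpow_le_rpow_of_exponent_le hn1 hp0
  have hsqpos : 0 ≤ Real.sqrt (2/m) := Real.sqrt_nonneg _
  have hsqle : Real.sqrt (2/m) ≤ Real.sqrt (160/m) := by
    apply Real.sqrt_le_sqrt
    rw [div_le_div_iff₀ hm0 hm0]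
    nlinarith
  haveI : Nonempty (Fin n) := ⟨⟨0, hn0⟩⟩
  have huniv_ne : (Finset.univ : Finset (Fin n)).Nonempty := Finset.univ_nonempty
  set M : ℝ := Finset.univ.sup' huniv_ne u with hMdef
  have hxM : ∀ y, u y ≤ M := fun y => Finset.le_sup' u (Finset.mem_univ y)
  obtain ⟨x₀, -, hx₀⟩ := Finset.exists_mem_eq_sup' huniv_ne u
  have hfinal : M ≤ Real.sqrt (2/m) * (n:ℝ)^p →
      u x ≤ (n:ℝ)^p * Real.sqrt (160/m) := by
    intro h
    calc u x ≤ M := hxM x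
      _ ≤ Real.sqrt (2/m) * (n:ℝ)^p := h
      _ ≤ Real.sqrt (160/m) * (n:ℝ)^p := mul_le_mul_of_nonneg_right hsqle (by positivity)
      _ = (n:ℝ)^p * Real.sqrt (160/m) := mul_comm _ _
  apply hfinal
  rcases le_or_gt M 0 with hM0 | hM0
  · calc M ≤ 0 := hM0
      _ ≤ _ := by positivity
  -- the "bad level set" conclusion
  have hbad : ∀ θ : ℝ, 0 ≤ θ →
      (¬ ∀ i, 2 * ((Stmt17Aux.lvl u θ) ∩ C i).card ≤ (C i).card) →
      θ ≤ Real.sqrt (2/m) := by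
    intro θ hθ0 hb
    push_neg at hb
    obtain ⟨i, hi⟩ := hb
    have h1 : θ^2 * (((Stmt17Aux.lvl u θ)).card : ℝ) ≤ 1 := by
      have h2 : ∀ y ∈ Stmt17Aux.lvl u θ, θ^2 ≤ u y^2 := by
        intro y hy
        have := Stmt17Aux.mem_lvl.mp hy
        nlinarith
      calc θ^2 * (((Stmt17Aux.lvl u θ)).card:ℝ) = ∑ _y ∈ Stmt17Aux.lvl u θ, θ^2 := by
            rw [Finset.sum_const, nsmul_eq_mul, mul_comm]
        _ ≤ ∑ y ∈ Stmt17Aux.lvl u θ, u y^2 := Finset.sum_le_sum h2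
        _ ≤ ∑ y, u y^2 := Finset.sum_le_sum_of_subset_of_nonneg (Finset.subset_univ _)
            (fun y _ _ => sq_nonneg _)
        _ = 1 := hu
    have h3 : m ≤ 2 * (((Stmt17Aux.lvl u θ)).card:ℝ) := by
      have h4 : ((C i).card:ℝ) < 2 * ((((Stmt17Aux.lvl u θ)) ∩ C i).card:ℝ) := by
        exact_mod_cast hi
      have h5 : ((((Stmt17Aux.lvl u θ)) ∩ C i).card:ℝ) ≤ (((Stmt17Aux.lvl u θ)).card:ℝ) := by
        exact_mod_cast Finset.card_le_card Finset.inter_subset_left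
      linarith [hmle i]
    have h6 : θ^2 ≤ 2/m := by
      rw [le_div_iff₀ hm0]
      nlinarith [mul_le_mul_of_nonneg_left h3 (sq_nonneg θ)]
    calc θ = Real.sqrt (θ^2) := (Real.sqrt_sq hθ0).symm
      _ ≤ Real.sqrt (2/m) := Real.sqrt_le_sqrt h6
  rcases le_or_gt lam 0 with hlam0 | hlam0
  · -- λ ≤ 0 : the topmost level set itself must be "bad"
    have hx₀mem : x₀ ∈ Stmt17Aux.lvl u M := Stmt17Aux.mem_lvl.mpr (le_of_eq hx₀)
    have hnotgood : ¬ ∀ i, 2 * ((Stmt17Aux.lvl u M) ∩ C i).card ≤ (C i).card := by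
      intro hgood
      have hcard1 : 1 ≤ (Stmt17Aux.lvl u M).card := Finset.card_pos.mpr ⟨x₀, hx₀mem⟩
      have hexp := Stmt17Aux.expansion G C hpart hinner (Stmt17Aux.lvl u M) hgood
      have hE0 : (0:ℝ) < (eCount G (Stmt17Aux.lvl u M) (Stmt17Aux.lvl u M)ᶜ : ℝ) := by
        have hc1 : (1:ℝ) ≤ ((Stmt17Aux.lvl u M).card : ℝ) := by exact_mod_cast hcard1
        have hd1 : (1:ℝ) ≤ (d:ℝ) := by exact_mod_cast hd
        have hdc : (1:ℝ) ≤ (d:ℝ) * ((Stmt17Aux.lvl u M).card:ℝ) := by nlinarith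
        nlinarith [hexp, mul_le_mul_of_nonneg_left hdc hφ.le]
      have hEne : eCount G (Stmt17Aux.lvl u M) (Stmt17Aux.lvl u M)ᶜ ≠ 0 := by
        intro h
        rw [h] at hE0
        simp at hE0
      have hEne' : ∑ y ∈ Stmt17Aux.lvl u M, ∑ z ∈ (Stmt17Aux.lvl u M)ᶜ,
          (if G.Adj y z then 1 else 0) ≠ 0 := hEne
      obtain ⟨y, hy, hyne⟩ := Finset.exists_ne_zero_of_sum_ne_zero hEne'
      obtain ⟨z, hz, hzne⟩ := Finset.exists_ne_zero_of_sum_ne_zero hyne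
      have hadj : G.Adj y z := by
        by_contra hc
        rw [if_neg hc] at hzne
        exact hzne rfl
      have hyM : M ≤ u y := Stmt17Aux.mem_lvl.mp hy
      have hzM : u z < M := by
        have hz' : z ∉ Stmt17Aux.lvl u M := Finset.mem_compl.mp hz
        by_contra hc
        exact hz' (Stmt17Aux.mem_lvl.mpr (not_lt.mp hc))
      have hid := Stmt17Aux.cross_identity G hd hreg heig (Stmt17Aux.lvl u M)
      have hterm : ∀ y' ∈ Stmt17Aux.lvl u M, ∀ z' ∈ (Stmt17Aux.lvl u M)ᶜ,
          (0:ℝ) ≤ (if G.Adj y' z' then u y' - u z' else 0) := by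
        intro y' hy' z' hz'
        have h1 : M ≤ u y' := Stmt17Aux.mem_lvl.mp hy'
        have h2 : u z' < M := by
          have hz'' : z' ∉ Stmt17Aux.lvl u M := Finset.mem_compl.mp hz'
          by_contra hc
          exact hz'' (Stmt17Aux.mem_lvl.mpr (not_lt.mp hc))
        split
        · linarith
        · rfl
      have hinner_low : (if G.Adj y z then u y - u z else 0)
          ≤ ∑ z' ∈ (Stmt17Aux.lvl u M)ᶜ, (if G.Adj y z' then u y - u z' else 0) :=
        Finset.single_le_sum (fun z' hz' => hterm y hy z' hz') hz
      have houter_low : ∑ z' ∈ (Stmt17Aux.lvl u M)ᶜ, (if G.Adj y z' then u y - u z' else 0)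
          ≤ ∑ y' ∈ Stmt17Aux.lvl u M, ∑ z' ∈ (Stmt17Aux.lvl u M)ᶜ,
              (if G.Adj y' z' then u y' - u z' else 0) :=
        Finset.single_le_sum
          (fun y' hy' => Finset.sum_nonneg (fun z' hz' => hterm y' hy' z' hz')) hy
      have hBpos : 0 < ∑ y' ∈ Stmt17Aux.lvl u M, u y' :=
        Finset.sum_pos (fun y' hy' => lt_of_lt_of_le hM0 (Stmt17Aux.mem_lvl.mp hy'))
          ⟨x₀, hx₀mem⟩
      have hneg : lam * ((d:ℝ) * ∑ y' ∈ Stmt17Aux.lvl u M, u y') ≤ 0 := by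
        have hdB : 0 ≤ (d:ℝ) * ∑ y' ∈ Stmt17Aux.lvl u M, u y' := by positivity
        exact mul_nonpos_of_nonpos_of_nonneg hlam0 hdB
      rw [if_pos hadj] at hinner_low
      have := hid
      linarith
    have h7 := hbad M hM0.le hnotgood
    calc M ≤ Real.sqrt (2/m) := h7
      _ = Real.sqrt (2/m) * 1 := (mul_one _).symm
      _ ≤ Real.sqrt (2/m) * (n:ℝ)^p := mul_le_mul_of_nonneg_left hnp1 hsqpos
  · -- λ > 0
    set a : ℝ := 2*lam/φ with hadef
    have ha0 : 0 < a := by positivity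
    have haφ : a ≤ φ/25 := by
      rw [hadef, div_le_div_iff₀ hφ (by norm_num : (0:ℝ) < 25)]
      nlinarith
    have ha1 : a ≤ 1/25 := by linarith
    have h1a : (0:ℝ) < 1 - a := by linarith
    have hθpos : ∀ j : ℕ, 0 < M * (1-a)^j := fun j => mul_pos hM0 (pow_pos h1a j)
    have hθle : ∀ j : ℕ, M * (1-a)^j ≤ M := by
      intro j
      have h1 : (1-a)^j ≤ 1 := pow_le_one₀ h1a.le (by linarith)
      calc M * (1-a)^j ≤ M * 1 := mul_le_mul_of_nonneg_left h1 hM0.le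
        _ = M := mul_one M
    have hθmono : ∀ j : ℕ, M * (1-a)^(j+1) ≤ M * (1-a)^j := by
      intro j
      have h1 : (1-a)^(j+1) ≤ (1-a)^j := by
        rw [pow_succ]
        calc (1-a)^j * (1-a) ≤ (1-a)^j * 1 :=
              mul_le_mul_of_nonneg_left (by linarith) (pow_nonneg h1a.le j)
          _ = (1-a)^j := mul_one _
      exact mul_le_mul_of_nonneg_left h1 hM0.le
    have hSmono : ∀ j : ℕ, Stmt17Aux.lvl u (M * (1-a)^j) ⊆ Stmt17Aux.lvl u (M * (1-a)^(j+1)) := by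
      intro j y hy
      exact Stmt17Aux.mem_lvl.mpr (le_trans (hθmono j) (Stmt17Aux.mem_lvl.mp hy))
    have hx₀j : ∀ j : ℕ, x₀ ∈ Stmt17Aux.lvl u (M * (1-a)^j) := fun j =>
      Stmt17Aux.mem_lvl.mpr (by rw [← hx₀]; exact hθle j)
    have hc1 : ∀ j : ℕ, (1:ℝ) ≤ ((Stmt17Aux.lvl u (M * (1-a)^j)).card : ℝ) := fun j => by
      exact_mod_cast Finset.card_pos.mpr ⟨x₀, hx₀j j⟩
    have hcn : ∀ j : ℕ, ((Stmt17Aux.lvl u (M * (1-a)^j)).card : ℝ) ≤ (n:ℝ) := by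
      intro j
      have h1 : (Stmt17Aux.lvl u (M * (1-a)^j)).card ≤ n :=
        le_trans (Finset.card_le_univ _) (le_of_eq (by simp))
      exact_mod_cast h1
    have hdiffcard : ∀ j : ℕ,
        ((Stmt17Aux.lvl u (M * (1-a)^(j+1)) \ Stmt17Aux.lvl u (M * (1-a)^j)).card : ℝ)
        = ((Stmt17Aux.lvl u (M * (1-a)^(j+1))).card:ℝ)
          - ((Stmt17Aux.lvl u (M * (1-a)^j)).card:ℝ) := by
      intro j
      rw [Finset.card_sdiff_of_subset (hSmono j)]
      exact_mod_cast Nat.cast_sub (Finset.card_le_card (hSmono j))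
    -- unconditional layered bound
    have hLB : ∀ j : ℕ, (1-a) * ∑ y ∈ Stmt17Aux.lvl u (M * (1-a)^j), u y
        ≤ M * (1-a)^j * ((Stmt17Aux.lvl u (M * (1-a)^j)).card:ℝ)
          + ∑ l ∈ Finset.range j, a * (M * (1-a)^l * ((Stmt17Aux.lvl u (M * (1-a)^l)).card:ℝ)) := by
      intro j
      induction j with
      | zero =>
        simp only [Finset.range_zero, Finset.sum_empty, add_zero, pow_zero, mul_one]
        have h1 : ∑ y ∈ Stmt17Aux.lvl u M, u y ≤ M * ((Stmt17Aux.lvl u M).card:ℝ) := by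
          calc ∑ y ∈ Stmt17Aux.lvl u M, u y ≤ ∑ _y ∈ Stmt17Aux.lvl u M, M :=
                Finset.sum_le_sum (fun y _ => hxM y)
            _ = M * ((Stmt17Aux.lvl u M).card:ℝ) := by
                rw [Finset.sum_const, nsmul_eq_mul, mul_comm]
        have hsum0 : 0 ≤ ∑ y ∈ Stmt17Aux.lvl u M, u y :=
          Finset.sum_nonneg fun y hy => le_trans hM0.le (Stmt17Aux.mem_lvl.mp hy)
        nlinarith
      | succ j ih =>
        have hsplit : ∑ y ∈ Stmt17Aux.lvl u (M * (1-a)^(j+1)), u y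
            = ∑ y ∈ Stmt17Aux.lvl u (M * (1-a)^(j+1)) \ Stmt17Aux.lvl u (M * (1-a)^j), u y
              + ∑ y ∈ Stmt17Aux.lvl u (M * (1-a)^j), u y :=
          (Finset.sum_sdiff (hSmono j)).symm
        have hdiff : ∑ y ∈ Stmt17Aux.lvl u (M * (1-a)^(j+1)) \ Stmt17Aux.lvl u (M * (1-a)^j), u y
            ≤ M * (1-a)^j * (((Stmt17Aux.lvl u (M * (1-a)^(j+1))).card:ℝ)
                - ((Stmt17Aux.lvl u (M * (1-a)^j)).card:ℝ)) := by
          calc ∑ y ∈ Stmt17Aux.lvl u (M * (1-a)^(j+1)) \ Stmt17Aux.lvl u (M * (1-a)^j), u y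
              ≤ ∑ _y ∈ Stmt17Aux.lvl u (M * (1-a)^(j+1)) \ Stmt17Aux.lvl u (M * (1-a)^j),
                  (M * (1-a)^j) := by
                refine Finset.sum_le_sum fun y hy => ?_
                have hyn : y ∉ Stmt17Aux.lvl u (M * (1-a)^j) := (Finset.mem_sdiff.mp hy).2
                have hlt : ¬ M * (1-a)^j ≤ u y := fun hcon => hyn (Stmt17Aux.mem_lvl.mpr hcon)
                linarith [lt_of_not_ge hlt]
            _ = M * (1-a)^j
                * (((Stmt17Aux.lvl u (M * (1-a)^(j+1))) \ Stmt17Aux.lvl u (M * (1-a)^j)).card:ℝ) := by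
                rw [Finset.sum_const, nsmul_eq_mul, mul_comm]
            _ = M * (1-a)^j * (((Stmt17Aux.lvl u (M * (1-a)^(j+1))).card:ℝ)
                - ((Stmt17Aux.lvl u (M * (1-a)^j)).card:ℝ)) := by rw [hdiffcard j]
        rw [Finset.sum_range_succ]
        have h2 : (1-a) * ∑ y ∈ Stmt17Aux.lvl u (M * (1-a)^(j+1)) \ Stmt17Aux.lvl u (M * (1-a)^j), u y
            ≤ (1-a) * (M * (1-a)^j * (((Stmt17Aux.lvl u (M * (1-a)^(j+1))).card:ℝ)
                - ((Stmt17Aux.lvl u (M * (1-a)^j)).card:ℝ))) :=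
          mul_le_mul_of_nonneg_left hdiff h1a.le
        have hrec : M * (1-a)^(j+1) = (1-a) * (M * (1-a)^j) := by ring
        calc (1-a) * ∑ y ∈ Stmt17Aux.lvl u (M * (1-a)^(j+1)), u y
            = (1-a) * ∑ y ∈ Stmt17Aux.lvl u (M * (1-a)^j), u y
              + (1-a) * ∑ y ∈ Stmt17Aux.lvl u (M * (1-a)^(j+1)) \ Stmt17Aux.lvl u (M * (1-a)^j), u y := by
              rw [hsplit]; ring
          _ ≤ (M * (1-a)^j * ((Stmt17Aux.lvl u (M * (1-a)^j)).card:ℝ)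
                + ∑ l ∈ Finset.range j, a * (M * (1-a)^l * ((Stmt17Aux.lvl u (M * (1-a)^l)).card:ℝ)))
              + (1-a) * (M * (1-a)^j * (((Stmt17Aux.lvl u (M * (1-a)^(j+1))).card:ℝ)
                - ((Stmt17Aux.lvl u (M * (1-a)^j)).card:ℝ))) := by
              linarith [ih]
          _ = M * (1-a)^(j+1) * ((Stmt17Aux.lvl u (M * (1-a)^(j+1))).card:ℝ)
              + (∑ l ∈ Finset.range j, a * (M * (1-a)^l * ((Stmt17Aux.lvl u (M * (1-a)^l)).card:ℝ))
                + a * (M * (1-a)^j * ((Stmt17Aux.lvl u (M * (1-a)^j)).card:ℝ))) := by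
              rw [hrec]; ring
    -- layered bound with geometric control
    have hlayer : ∀ j : ℕ,
        (∀ l, l < j → (1+2*φ/5) * ((Stmt17Aux.lvl u (M * (1-a)^l)).card:ℝ)
            ≤ ((Stmt17Aux.lvl u (M * (1-a)^(l+1))).card:ℝ)) →
        ∑ y ∈ Stmt17Aux.lvl u (M * (1-a)^j), u y
          ≤ (50/43) * (M * (1-a)^j * ((Stmt17Aux.lvl u (M * (1-a)^j)).card:ℝ)) := by
      intro j hgrow
      have hepos : ∀ l : ℕ, 0 < M * (1-a)^l * ((Stmt17Aux.lvl u (M * (1-a)^l)).card:ℝ) :=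
        fun l => mul_pos (hθpos l) (lt_of_lt_of_le one_pos (hc1 l))
      have hestep : ∀ l, l < j →
          ((1-a)*(1+2*φ/5)) * (M * (1-a)^l * ((Stmt17Aux.lvl u (M * (1-a)^l)).card:ℝ))
          ≤ M * (1-a)^(l+1) * ((Stmt17Aux.lvl u (M * (1-a)^(l+1))).card:ℝ) := by
        intro l hl
        have h3 := mul_le_mul_of_nonneg_left (hgrow l hl)
          (show (0:ℝ) ≤ (1-a) * (M * (1-a)^l) by positivity)
        calc ((1-a)*(1+2*φ/5)) * (M * (1-a)^l * ((Stmt17Aux.lvl u (M * (1-a)^l)).card:ℝ))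
            = ((1-a) * (M * (1-a)^l)) * ((1+2*φ/5) * ((Stmt17Aux.lvl u (M * (1-a)^l)).card:ℝ)) := by
              ring
          _ ≤ ((1-a) * (M * (1-a)^l)) * ((Stmt17Aux.lvl u (M * (1-a)^(l+1))).card:ℝ) := h3
          _ = M * (1-a)^(l+1) * ((Stmt17Aux.lvl u (M * (1-a)^(l+1))).card:ℝ) := by ring
      have hD := Stmt17Aux.abstract_layer ha0 haφ hφ hφ1.le
        (fun l => M * (1-a)^l * ((Stmt17Aux.lvl u (M * (1-a)^l)).card:ℝ)) hepos j hestep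
      have hD' : ∑ l ∈ Finset.range j, a * (M * (1-a)^l * ((Stmt17Aux.lvl u (M * (1-a)^l)).card:ℝ))
          ≤ (5/43) * (M * (1-a)^j * ((Stmt17Aux.lvl u (M * (1-a)^j)).card:ℝ)) := hD
      have h5 := hLB j
      have hB0 : 0 ≤ ∑ y ∈ Stmt17Aux.lvl u (M * (1-a)^j), u y :=
        Finset.sum_nonneg fun y hy => le_trans (hθpos j).le (Stmt17Aux.mem_lvl.mp hy)
      nlinarith [h5, hD', hB0, ha1, hepos j]
    -- growth induction
    have hgrowind : ∀ j : ℕ,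
        (∀ l, l < j → ∀ i, 2 * ((Stmt17Aux.lvl u (M * (1-a)^l)) ∩ C i).card ≤ (C i).card) →
        ∀ l, l < j → (1+2*φ/5) * ((Stmt17Aux.lvl u (M * (1-a)^l)).card:ℝ)
          ≤ ((Stmt17Aux.lvl u (M * (1-a)^(l+1))).card:ℝ) := by
      intro j
      induction j with
      | zero => intro _ l hl; omega
      | succ j ih =>
        intro hgood l hl
        rcases Nat.lt_succ_iff_lt_or_eq.mp hl with h | h
        · exact ih (fun l' hl' => hgood l' (Nat.lt_succ_of_lt hl')) l h
        · subst h
          have hgrow' := ih (fun l' hl' => hgood l' (Nat.lt_succ_of_lt hl'))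
          have hBj := hlayer l hgrow'
          have hgoodl := hgood l (Nat.lt_succ_self l)
          -- the growth step
          have hexp := Stmt17Aux.expansion G C hpart hinner (Stmt17Aux.lvl u (M * (1-a)^l)) hgoodl
          have hid := Stmt17Aux.cross_identity G hd hreg heig (Stmt17Aux.lvl u (M * (1-a)^l))
          have hcl := Stmt17Aux.cross_lower G (hθmono l) (hSmono l)
            (fun y hy => Stmt17Aux.mem_lvl.mp hy)
            (fun z hz => lt_of_not_ge (fun hc => hz (Stmt17Aux.mem_lvl.mpr hc)))
            (fun z hz => lt_of_not_ge (fun hc => hz (Stmt17Aux.mem_lvl.mpr hc)))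
          have hceq : (Stmt17Aux.lvl u (M * (1-a)^l))ᶜ
              = (Stmt17Aux.lvl u (M * (1-a)^(l+1)))ᶜ
                ∪ (Stmt17Aux.lvl u (M * (1-a)^(l+1)) \ Stmt17Aux.lvl u (M * (1-a)^l)) := by
            ext z
            simp only [Finset.mem_compl, Finset.mem_union, Finset.mem_sdiff]
            have hsub := @hSmono l z
            tauto
          have hdisj : Disjoint ((Stmt17Aux.lvl u (M * (1-a)^(l+1)))ᶜ)
              (Stmt17Aux.lvl u (M * (1-a)^(l+1)) \ Stmt17Aux.lvl u (M * (1-a)^l)) :=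
            Finset.disjoint_left.mpr
              (fun z hz1 hz2 => (Finset.mem_compl.mp hz1) (Finset.mem_sdiff.mp hz2).1)
          have hsplitE : (eCount G (Stmt17Aux.lvl u (M * (1-a)^l)) (Stmt17Aux.lvl u (M * (1-a)^l))ᶜ : ℝ)
              = (eCount G (Stmt17Aux.lvl u (M * (1-a)^l)) (Stmt17Aux.lvl u (M * (1-a)^(l+1)))ᶜ : ℝ)
                + (eCount G (Stmt17Aux.lvl u (M * (1-a)^l))
                    (Stmt17Aux.lvl u (M * (1-a)^(l+1)) \ Stmt17Aux.lvl u (M * (1-a)^l)) : ℝ) := by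
            rw [hceq, Stmt17Aux.eCount_union G _ hdisj]
            push_cast
            ring
          have hE2 : (eCount G (Stmt17Aux.lvl u (M * (1-a)^l))
                (Stmt17Aux.lvl u (M * (1-a)^(l+1)) \ Stmt17Aux.lvl u (M * (1-a)^l)) : ℝ)
              ≤ (d:ℝ) * (((Stmt17Aux.lvl u (M * (1-a)^(l+1))).card:ℝ)
                - ((Stmt17Aux.lvl u (M * (1-a)^l)).card:ℝ)) := by
            have h7 := Stmt17Aux.eCount_le G hreg (Stmt17Aux.lvl u (M * (1-a)^l))
              (Stmt17Aux.lvl u (M * (1-a)^(l+1)) \ Stmt17Aux.lvl u (M * (1-a)^l))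
            calc (eCount G (Stmt17Aux.lvl u (M * (1-a)^l))
                  (Stmt17Aux.lvl u (M * (1-a)^(l+1)) \ Stmt17Aux.lvl u (M * (1-a)^l)) : ℝ)
                ≤ (d:ℝ) * (((Stmt17Aux.lvl u (M * (1-a)^(l+1))
                    \ Stmt17Aux.lvl u (M * (1-a)^l)).card:ℝ)) := by exact_mod_cast h7
              _ = (d:ℝ) * (((Stmt17Aux.lvl u (M * (1-a)^(l+1))).card:ℝ)
                    - ((Stmt17Aux.lvl u (M * (1-a)^l)).card:ℝ)) := by rw [hdiffcard l]
          have hgap : M * (1-a)^l - M * (1-a)^(l+1) = a * (M * (1-a)^l) := by ring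
          have hX : a * (M * (1-a)^l)
              * (eCount G (Stmt17Aux.lvl u (M * (1-a)^l)) (Stmt17Aux.lvl u (M * (1-a)^(l+1)))ᶜ : ℝ)
              ≤ lam * ((d:ℝ) * ((50/43) * (M * (1-a)^l * ((Stmt17Aux.lvl u (M * (1-a)^l)).card:ℝ)))) := by
            have h9 : (M * (1-a)^l - M * (1-a)^(l+1))
                * (eCount G (Stmt17Aux.lvl u (M * (1-a)^l)) (Stmt17Aux.lvl u (M * (1-a)^(l+1)))ᶜ : ℝ)
                ≤ lam * ((d:ℝ) * ∑ y ∈ Stmt17Aux.lvl u (M * (1-a)^l), u y) := by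
              rw [← hid]; exact hcl
            rw [hgap] at h9
            have h10 : lam * ((d:ℝ) * ∑ y ∈ Stmt17Aux.lvl u (M * (1-a)^l), u y)
                ≤ lam * ((d:ℝ) * ((50/43) * (M * (1-a)^l * ((Stmt17Aux.lvl u (M * (1-a)^l)).card:ℝ)))) := by
              apply mul_le_mul_of_nonneg_left _ (le_of_lt hlam0)
              exact mul_le_mul_of_nonneg_left hBj (by positivity)
            linarith
          have hY : φ * ((d:ℝ) * ((Stmt17Aux.lvl u (M * (1-a)^l)).card:ℝ))
              - (d:ℝ) * (((Stmt17Aux.lvl u (M * (1-a)^(l+1))).card:ℝ)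
                - ((Stmt17Aux.lvl u (M * (1-a)^l)).card:ℝ))
              ≤ (eCount G (Stmt17Aux.lvl u (M * (1-a)^l)) (Stmt17Aux.lvl u (M * (1-a)^(l+1)))ᶜ : ℝ) := by
            linarith [hexp, hsplitE, hE2]
          have hlameq : lam = a * φ / 2 := by
            rw [hadef]; field_simp
          have hpos1 : (0:ℝ) < a * (M * (1-a)^l) := mul_pos ha0 (hθpos l)
          have hZ : a * (M * (1-a)^l) * (φ * ((d:ℝ) * ((Stmt17Aux.lvl u (M * (1-a)^l)).card:ℝ))
              - (d:ℝ) * (((Stmt17Aux.lvl u (M * (1-a)^(l+1))).card:ℝ)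
                - ((Stmt17Aux.lvl u (M * (1-a)^l)).card:ℝ)))
              ≤ a * (M * (1-a)^l)
                * ((d:ℝ) * ((25/43) * (φ * ((Stmt17Aux.lvl u (M * (1-a)^l)).card:ℝ)))) := by
            calc a * (M * (1-a)^l) * (φ * ((d:ℝ) * ((Stmt17Aux.lvl u (M * (1-a)^l)).card:ℝ))
                - (d:ℝ) * (((Stmt17Aux.lvl u (M * (1-a)^(l+1))).card:ℝ)
                  - ((Stmt17Aux.lvl u (M * (1-a)^l)).card:ℝ)))
                ≤ a * (M * (1-a)^l)
                  * (eCount G (Stmt17Aux.lvl u (M * (1-a)^l)) (Stmt17Aux.lvl u (M * (1-a)^(l+1)))ᶜ : ℝ) :=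
                  mul_le_mul_of_nonneg_left hY hpos1.le
              _ ≤ lam * ((d:ℝ) * ((50/43) * (M * (1-a)^l * ((Stmt17Aux.lvl u (M * (1-a)^l)).card:ℝ)))) := hX
              _ = a * (M * (1-a)^l)
                  * ((d:ℝ) * ((25/43) * (φ * ((Stmt17Aux.lvl u (M * (1-a)^l)).card:ℝ)))) := by
                  rw [hlameq]; ring
          have hW := (mul_le_mul_iff_right₀ hpos1).mp hZ
          have hd0 : (0:ℝ) < (d:ℝ) := by exact_mod_cast hd
          have hW2 : φ * ((Stmt17Aux.lvl u (M * (1-a)^l)).card:ℝ)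
              - (((Stmt17Aux.lvl u (M * (1-a)^(l+1))).card:ℝ) - ((Stmt17Aux.lvl u (M * (1-a)^l)).card:ℝ))
              ≤ (25/43) * (φ * ((Stmt17Aux.lvl u (M * (1-a)^l)).card:ℝ)) := by
            have h11 : (d:ℝ) * (φ * ((Stmt17Aux.lvl u (M * (1-a)^l)).card:ℝ)
                - (((Stmt17Aux.lvl u (M * (1-a)^(l+1))).card:ℝ) - ((Stmt17Aux.lvl u (M * (1-a)^l)).card:ℝ)))
                ≤ (d:ℝ) * ((25/43) * (φ * ((Stmt17Aux.lvl u (M * (1-a)^l)).card:ℝ))) := by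
              calc (d:ℝ) * (φ * ((Stmt17Aux.lvl u (M * (1-a)^l)).card:ℝ)
                  - (((Stmt17Aux.lvl u (M * (1-a)^(l+1))).card:ℝ)
                    - ((Stmt17Aux.lvl u (M * (1-a)^l)).card:ℝ)))
                  = φ * ((d:ℝ) * ((Stmt17Aux.lvl u (M * (1-a)^l)).card:ℝ))
                    - (d:ℝ) * (((Stmt17Aux.lvl u (M * (1-a)^(l+1))).card:ℝ)
                      - ((Stmt17Aux.lvl u (M * (1-a)^l)).card:ℝ)) := by ring
                _ ≤ (d:ℝ) * ((25/43) * (φ * ((Stmt17Aux.lvl u (M * (1-a)^l)).card:ℝ))) := hW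
            exact (mul_le_mul_iff_right₀ hd0).mp h11
          have hφc : 0 ≤ φ * ((Stmt17Aux.lvl u (M * (1-a)^l)).card:ℝ) := mul_nonneg hφ.le (Nat.cast_nonneg _)
          linarith
    -- cumulative growth
    have hcardgrow : ∀ j : ℕ,
        (∀ l, l < j → ∀ i, 2 * ((Stmt17Aux.lvl u (M * (1-a)^l)) ∩ C i).card ≤ (C i).card) →
        ((1+2*φ/5):ℝ)^j ≤ ((Stmt17Aux.lvl u (M * (1-a)^j)).card:ℝ) := by
      intro j
      induction j with
      | zero => intro _; simpa using hc1 0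
      | succ j ih =>
        intro hgood
        have h1 := ih (fun l hl => hgood l (Nat.lt_succ_of_lt hl))
        have h2 := hgrowind (j+1) hgood j (Nat.lt_succ_self j)
        calc ((1+2*φ/5):ℝ)^(j+1) = (1+2*φ/5) * (1+2*φ/5)^j := by ring
          _ ≤ (1+2*φ/5) * ((Stmt17Aux.lvl u (M * (1-a)^j)).card:ℝ) :=
              mul_le_mul_of_nonneg_left h1 (by linarith)
          _ ≤ ((Stmt17Aux.lvl u (M * (1-a)^(j+1))).card:ℝ) := h2
    -- there must be a bad level
    have hexJ : ∃ j : ℕ, ¬ ∀ i, 2 * ((Stmt17Aux.lvl u (M * (1-a)^j)) ∩ C i).card ≤ (C i).card := by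
      by_contra hcon
      push_neg at hcon
      obtain ⟨j, hj⟩ := pow_unbounded_of_one_lt (n:ℝ) (show (1:ℝ) < 1+2*φ/5 by linarith)
      have h1 := hcardgrow j (fun l _ => hcon l)
      exact absurd (le_trans h1 (hcn j)) (not_le.mpr hj)
    obtain ⟨J, hJbad, hJmin⟩ : ∃ J : ℕ,
        (¬ ∀ i, 2 * ((Stmt17Aux.lvl u (M * (1-a)^J)) ∩ C i).card ≤ (C i).card)
        ∧ ∀ l, l < J → ∀ i, 2 * ((Stmt17Aux.lvl u (M * (1-a)^l)) ∩ C i).card ≤ (C i).card := by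
      refine ⟨Nat.find hexJ, Nat.find_spec hexJ, fun l hl => ?_⟩
      have := Nat.find_min hexJ hl
      tauto
    have hpowJ : ((1+2*φ/5):ℝ)^J ≤ (n:ℝ) := le_trans (hcardgrow J hJmin) (hcn J)
    have hMJ : M * (1-a)^J ≤ Real.sqrt (2/m) := hbad (M * (1-a)^J) (hθpos J).le hJbad
    have hpa : 5*a/φ ≤ p := by
      rw [hadef, hpdef]
      rw [div_le_div_iff₀ (by positivity) (by positivity : (0:ℝ) < φ^2)]
      have h12 : 5 * (2*lam/φ) * φ^2 = 10 * lam * φ := by field_simp; ring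
      rw [h12]
      nlinarith [mul_le_mul_of_nonneg_right hlam (le_of_lt hφ)]
    have hstep1 : (1-a)⁻¹ ≤ (1+2*φ/5)^p := Stmt17Aux.rpow_aux ha0 ha1 hφ hφ1.le hpa
    have hstep2 : ((1-a)⁻¹)^J ≤ ((1+2*φ/5:ℝ)^p)^J :=
      pow_le_pow_left₀ (by positivity) hstep1 J
    have hstep3 : ((1+2*φ/5:ℝ)^p)^J = ((1+2*φ/5:ℝ)^(J:ℕ))^p := by
      have hb : (0:ℝ) ≤ 1+2*φ/5 := by positivity
      rw [← Real.rpow_natCast ((1+2*φ/5:ℝ)^p) J, ← Real.rpow_natCast (1+2*φ/5:ℝ) J,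
        ← Real.rpow_mul hb, ← Real.rpow_mul hb, mul_comm p (J:ℝ)]
    have hstep4 : ((1+2*φ/5:ℝ)^(J:ℕ))^p ≤ (n:ℝ)^p :=
      Real.rpow_le_rpow (by positivity) hpowJ hp0
    have hfin : M ≤ Real.sqrt (2/m) * ((1-a)⁻¹)^J := by
      have hpw : 0 < ((1-a):ℝ)^J := pow_pos h1a J
      rw [inv_pow, ← div_eq_mul_inv, le_div_iff₀ hpw]
      exact hMJ
    calc M ≤ Real.sqrt (2/m) * ((1-a)⁻¹)^J := hfin
      _ ≤ Real.sqrt (2/m) * (n:ℝ)^p := by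
          apply mul_le_mul_of_nonneg_left _ hsqpos
          calc ((1-a)⁻¹)^J ≤ ((1+2*φ/5:ℝ)^p)^J := hstep2
            _ = ((1+2*φ/5:ℝ)^(J:ℕ))^p := hstep3
            _ ≤ (n:ℝ)^p := hstep4

/-- Let `G` be a `d`-regular graph admitting a
`(k,φ,ε)`-clustering `C₁,…,C_k` with `ε ≤ φ²/100`, and let `u` be a unit-norm
eigenvector of the normalized Laplacian `L_G = I − A_G/d` with eigenvalue at most
`2ε`.  Then `‖u‖_∞ ≤ n^{20ε/φ²}·√(160/minᵢ|Cᵢ|)`. -/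
theorem stmt17 (n k d : ℕ) (hk : 0 < k) (hd : 0 < d)
    (φ ε : ℝ) (hφ : 0 < φ) (hφ1 : φ < 1) (hε : 0 ≤ ε) (hεφ : ε ≤ φ ^ 2 / 100)
    (G : SimpleGraph (Fin n)) [DecidableRel G.Adj] (hreg : G.IsRegularOfDegree d)
    (C : Fin k → Finset (Fin n))
    (hpart : ∀ v : Fin n, ∃! i, v ∈ C i)
    (hCne : ∀ i, (C i).Nonempty)
    (hinner : ∀ i, ∀ S ⊆ C i, S.Nonempty → 2 * S.card ≤ (C i).card →
      φ * ((d : ℝ) * S.card) ≤ (eCount G S (C i \ S) : ℝ))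
    (houter : ∀ i, (eCount G (C i) (C i)ᶜ : ℝ) ≤ ε * ((d : ℝ) * (C i).card))
    (u : Fin n → ℝ) (hu : ∑ x, u x ^ 2 = 1)
    (lam : ℝ) (hlam : lam ≤ 2 * ε)
    (heig : ((1 : Matrix (Fin n) (Fin n) ℝ) - (d : ℝ)⁻¹ • G.adjMatrix ℝ).mulVec u = lam • u) :
    ∀ x, |u x| ≤ (n : ℝ) ^ (20 * ε / φ ^ 2) *
      Real.sqrt (160 /
        (Finset.univ.inf' (Finset.univ_nonempty_iff.mpr ⟨⟨0, hk⟩⟩)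
          fun i : Fin k => ((C i).card : ℝ))) := by
  intro x
  have hu' : ∑ x, (-u) x ^ 2 = 1 := by
    simpa [Pi.neg_apply, neg_sq] using hu
  have heig' : ((1 : Matrix (Fin n) (Fin n) ℝ) - (d : ℝ)⁻¹ • G.adjMatrix ℝ).mulVec (-u)
      = lam • (-u) := by
    rw [Matrix.mulVec_neg, heig]
    ext y
    simp
  have h1 := key hk hd hφ hφ1 hε hεφ G hreg C hpart hCne hinner u hu lam hlam heig x
  have h2 := key hk hd hφ hφ1 hε hεφ G hreg C hpart hCne hinner (-u) hu' lam hlam heig' x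
  rw [Pi.neg_apply] at h2
  exact abs_le.mpr ⟨by linarith, h1⟩
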